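/- For every p ∈ (0,1) and τ > 0 there exist a constant C_{p,τ} > 0 (depending only on p and τ) and an absolute constant C > 0 such that for all integers n ≥ 1, m ∈ ℤ and l ∈ {0,…,N−1} (with N = 2^n), the column residual satisfies (Σ_{k=0}^{N−1} |ε_{mnkl}|^2)^{1/2} ≤ (C_{p,τ} + C τ |m|) / N^{1/2−p}, where ε_{mnkl} = (Ã_{m,n})_{kl} − ψ_m(θ_l) δ_{kl}. -/

import Mathlib

/-! Statement 1: column residual bound (l²-norm over k) for the QFT-rotated multiplication operator. -/

noncomputable section

namespace QECD

/-- The index set `J_n = {−N/2,…,−1,1,…,N/2}` with `N = 2^n`. -/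
def Jn (n : ℕ) : Finset ℤ := (Finset.Icc (-(2 ^ (n - 1)) : ℤ) (2 ^ (n - 1))).erase 0

/-- The order-preserving enumeration `o : J_n → {0,…,N−1}`. -/
def oIdx (n : ℕ) (j : ℤ) : ℤ := if j < 0 then j + 2 ^ (n - 1) else j + 2 ^ (n - 1) - 1

/-- Scaled Fourier basis function `ψ_m(θ) = e^{−τ|m|^p/2} e^{imθ}`. -/
def psi (p τ : ℝ) (m : ℤ) (θ : ℝ) : ℂ :=
  (Real.exp (-(τ * |(m : ℝ)| ^ p) / 2) : ℂ) * Complex.exp (Complex.I * (m : ℂ) * (θ : ℂ))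

/-- Structure constants `c_{mj} = e^{−τ(|m|^p + |j|^p − |m+j|^p)/2}`. -/
def cst (p τ : ℝ) (m j : ℤ) : ℝ :=
  Real.exp (-(τ * (|(m : ℝ)| ^ p + |(j : ℝ)| ^ p - |((m + j : ℤ) : ℝ)| ^ p)) / 2)

/-- Truncated structure constants `c^{(n)}_{mj}`. -/
def cstN (p τ : ℝ) (n : ℕ) (m j : ℤ) : ℝ :=
  if m + j ∈ Jn n then cst p τ m j else 0

/-- Matrix elements `(Ã_{m,n})_{kl}` of the QFT-rotated multiplication operator. -/
def Atilde (p τ : ℝ) (n : ℕ) (m : ℤ) (k l : ℕ) : ℂ :=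
  (1 / (2 ^ n : ℂ)) * ∑ j ∈ Jn n,
    Complex.exp (2 * (Real.pi : ℂ) * Complex.I *
        ((((k : ℤ) - (l : ℤ)) * oIdx n j + (k : ℤ) * m : ℤ) : ℂ) / (2 ^ n : ℂ)) *
      (cstN p τ n m j : ℂ)

/-! ### Auxiliary real-analysis lemmas -/

lemma rpow_subadd {p : ℝ} (hp : 0 ≤ p) (hp1 : p ≤ 1) {u v : ℝ} (hu : 0 ≤ u) (hv : 0 ≤ v) :
    (u + v) ^ p ≤ u ^ p + v ^ p := by
  have := NNReal.rpow_add_le_add_rpow (Real.toNNReal u) (Real.toNNReal v) hp hp1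
  have h := NNReal.coe_le_coe.2 this
  push_cast at h
  rwa [Real.coe_toNNReal _ hu, Real.coe_toNNReal _ hv] at h

lemma bern {p : ℝ} (hp : 0 ≤ p) (hp1 : p ≤ 1) {u : ℝ} (hu : 0 ≤ u) :
    (1 + u) ^ p ≤ 1 + p * u := by
  have h := Real.geom_mean_le_arith_mean2_weighted (sub_nonneg.2 hp1) hp (by norm_num : (0:ℝ) ≤ 1)
      (by linarith : (0:ℝ) ≤ 1 + u) (by ring)
  calc (1 + u) ^ p = 1 ^ (1 - p) * (1 + u) ^ p := by rw [Real.one_rpow, one_mul]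
    _ ≤ (1 - p) * 1 + p * (1 + u) := h
    _ = 1 + p * u := by ring

lemma mvt_upper {p : ℝ} (hp : 0 ≤ p) (hp1 : p ≤ 1) {a b : ℝ} (ha : 0 < a) (hab : a ≤ b) :
    b ^ p - a ^ p ≤ p * a ^ (p - 1) * (b - a) := by
  have hu : 0 ≤ (b - a) / a := div_nonneg (by linarith) ha.le
  have h1 : b ^ p = a ^ p * (1 + (b - a) / a) ^ p := by
    rw [← Real.mul_rpow ha.le (by positivity)]
    congr 1
    field_simp
    ring
  have h2 : (1 + (b - a) / a) ^ p ≤ 1 + p * ((b - a) / a) := bern hp hp1 hu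
  have h3 : b ^ p ≤ a ^ p * (1 + p * ((b - a) / a)) := by
    rw [h1]; exact mul_le_mul_of_nonneg_left h2 (by positivity)
  have h4 : a ^ p * ((b - a) / a) = a ^ (p - 1) * (b - a) := by
    rw [Real.rpow_sub ha, Real.rpow_one]; field_simp
  calc b ^ p - a ^ p ≤ a ^ p * (1 + p * ((b - a) / a)) - a ^ p := by linarith
    _ = p * (a ^ p * ((b - a) / a)) := by ring
    _ = p * a ^ (p - 1) * (b - a) := by rw [h4]; ring

lemma mvt_lower {p : ℝ} (hp : 0 ≤ p) (hp1 : p ≤ 1) {a b : ℝ} (ha : 0 ≤ a) (hab : a ≤ b)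
    (hb : 0 < b) : p * b ^ (p - 1) * (b - a) ≤ b ^ p - a ^ p := by
  have hab' : a / b ≤ 1 := (div_le_one hb).2 hab
  have h0 : 0 ≤ a / b := div_nonneg ha hb.le
  have h := Real.geom_mean_le_arith_mean2_weighted (sub_nonneg.2 hp1) hp (by norm_num : (0:ℝ) ≤ 1)
      h0 (by ring)
  have h2 : (a / b) ^ p ≤ 1 - p * (1 - a / b) := by
    calc (a / b) ^ p = 1 ^ (1 - p) * (a / b) ^ p := by rw [Real.one_rpow, one_mul]
      _ ≤ (1 - p) * 1 + p * (a / b) := h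
      _ = 1 - p * (1 - a / b) := by ring
  have h1 : a ^ p = b ^ p * (a / b) ^ p := by
    rw [← Real.mul_rpow hb.le h0]; congr 1; field_simp
  have h3 : a ^ p ≤ b ^ p * (1 - p * (1 - a / b)) := by
    rw [h1]; exact mul_le_mul_of_nonneg_left h2 (by positivity)
  have h4 : b ^ p * (p * (1 - a / b)) = p * b ^ (p - 1) * (b - a) := by
    rw [Real.rpow_sub hb, Real.rpow_one]; field_simp
  nlinarith [Real.rpow_nonneg hb.le p]

lemma exp_neg_lipschitz {α β : ℝ} (hα : 0 ≤ α) (hβ : 0 ≤ β) :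
    |Real.exp (-α) - Real.exp (-β)| ≤ |α - β| := by
  wlog h : β ≤ α generalizing α β
  · rw [abs_sub_comm, abs_sub_comm α β]; exact this hβ hα (le_of_not_ge h)
  have h1 : Real.exp (-α) ≤ Real.exp (-β) := Real.exp_le_exp.2 (by linarith)
  rw [abs_of_nonpos (by linarith), abs_of_nonneg (by linarith)]
  have h2 : Real.exp (-α) = Real.exp (-β) * Real.exp (-(α - β)) := by
    rw [← Real.exp_add]; ring_nf
  have h3 : 1 - (α - β) ≤ Real.exp (-(α - β)) := by
    have := Real.add_one_le_exp (-(α - β)); linarith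
  have h4 : Real.exp (-β) ≤ 1 := Real.exp_le_one_iff.2 (by linarith)
  nlinarith [Real.exp_pos (-(α-β)), Real.exp_pos (-β)]

lemma exp_bound (s : ℕ) (hs : 1 ≤ s) {u : ℝ} (hu : 0 < u) :
    Real.exp (-u) ≤ ((s:ℝ)/u)^s := by
  have hs0 : (0:ℝ) < s := by exact_mod_cast hs
  have h1 : u/s ≤ Real.exp (u/s) := by have := Real.add_one_le_exp (u/s); linarith
  have h2 : (u/s)^s ≤ Real.exp (u/s)^s := pow_le_pow_left₀ (by positivity) h1 s
  rw [← Real.exp_nat_mul] at h2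
  have h3 : (s:ℝ)*(u/s) = u := by field_simp
  rw [h3] at h2
  have h4 : ((s:ℝ)/u)^s = ((u/(s:ℝ))^s)⁻¹ := by rw [← inv_pow, inv_div]
  rw [Real.exp_neg, h4]
  exact inv_anti₀ (by positivity) h2

/-! ### Combinatorial lemmas about `Jn` and `oIdx` -/

lemma mem_Jn {n : ℕ} {j : ℤ} : j ∈ Jn n ↔ j ≠ 0 ∧ -(2^(n-1):ℤ) ≤ j ∧ j ≤ 2^(n-1) := by
  simp [Jn, Finset.mem_erase, Finset.mem_Icc, and_assoc]

lemma two_pow_eq {n : ℕ} (hn : 1 ≤ n) : ((2^n : ℕ) : ℤ) = 2 * 2^(n-1) := by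
  have : n = (n-1) + 1 := by omega
  rw [this]; push_cast; ring

lemma sum_oIdx (n : ℕ) (hn : 1 ≤ n) (f : ℤ → ℂ) :
    ∑ j ∈ Jn n, f (oIdx n j) = ∑ s ∈ Finset.range (2^n), f (s : ℤ) := by
  have hKM : ((2^n : ℕ) : ℤ) = 2 * 2^(n-1) := two_pow_eq hn
  have hM : (1:ℤ) ≤ 2^(n-1) := by exact_mod_cast Nat.one_le_two_pow
  refine Finset.sum_nbij' (fun j => (oIdx n j).toNat)
    (fun s => if (s:ℤ) < 2^(n-1) then (s:ℤ) - 2^(n-1) else (s:ℤ) - 2^(n-1) + 1)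
    ?_ ?_ ?_ ?_ ?_
  · intro j hj
    rw [mem_Jn] at hj
    rw [Finset.mem_range]
    simp only [oIdx]
    split_ifs <;> omega
  · intro s hs
    rw [Finset.mem_range] at hs
    rw [mem_Jn]
    split_ifs <;> omega
  · intro j hj
    rw [mem_Jn] at hj
    simp only [oIdx]
    split_ifs <;> omega
  · intro s hs
    rw [Finset.mem_range] at hs
    simp only [oIdx]
    split_ifs <;> omega
  · intro j hj
    rw [mem_Jn] at hj
    congr 1
    simp only [oIdx]
    split_ifs <;> omega

lemma card_Jn (n : ℕ) (hn : 1 ≤ n) : (Jn n).card = 2^n := by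
  have hKM : ((2^n : ℕ) : ℤ) = 2 * 2^(n-1) := two_pow_eq hn
  have hM : (1:ℤ) ≤ 2^(n-1) := by exact_mod_cast Nat.one_le_two_pow
  rw [Jn, Finset.card_erase_of_mem
    (by rw [Finset.mem_Icc]; constructor <;> linarith), Int.card_Icc]
  omega

lemma sum_exp_oIdx (n : ℕ) (hn : 1 ≤ n) (t : ℤ) (ht : t ≠ 0)
    (ht2 : -((2:ℤ)^n) < t) (ht3 : t < 2^n) :
    ∑ j ∈ Jn n, Complex.exp (2 * (Real.pi:ℂ) * Complex.I * t * (oIdx n j) / (2^n : ℂ)) = 0 := by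
  set ω : ℂ := Complex.exp (2 * (Real.pi:ℂ) * Complex.I * t / (2^n : ℂ)) with hω
  have hN : ((2:ℂ)^n) ≠ 0 := pow_ne_zero _ two_ne_zero
  have hterm : ∀ j : ℤ, Complex.exp (2 * (Real.pi:ℂ) * Complex.I * t * j / (2^n : ℂ)) = ω ^ j := by
    intro j
    rw [hω, ← Complex.exp_int_mul]
    congr 1
    field_simp
  have h1 : ∑ j ∈ Jn n, Complex.exp (2 * (Real.pi:ℂ) * Complex.I * t * (oIdx n j) / (2^n : ℂ))
      = ∑ s ∈ Finset.range (2^n), ω ^ s := by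
    rw [sum_oIdx n hn (fun x => Complex.exp (2 * (Real.pi:ℂ) * Complex.I * t * x / (2^n : ℂ)))]
    refine Finset.sum_congr rfl fun s _ => ?_
    rw [hterm (s:ℤ), zpow_natCast]
  rw [h1]
  have hω1 : ω ≠ 1 := by
    intro hc
    rw [hω, Complex.exp_eq_one_iff] at hc
    obtain ⟨k, hk⟩ := hc
    have hπ : (Real.pi : ℂ) ≠ 0 := by
      simpa using Real.pi_ne_zero
    have h2I : (2 * (Real.pi:ℂ) * Complex.I) ≠ 0 :=
      mul_ne_zero (mul_ne_zero two_ne_zero hπ) Complex.I_ne_zero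
    have h3 : 2 * (Real.pi:ℂ) * Complex.I * t = k * (2 * (Real.pi:ℂ) * Complex.I) * 2^n := by
      have hc := congrArg (· * ((2:ℂ)^n)) hk
      simpa [div_mul_cancel₀, hN] using hc
    have h4 : (2 * (Real.pi:ℂ) * Complex.I) * t
        = (2 * (Real.pi:ℂ) * Complex.I) * ((k:ℂ) * 2^n) := by linear_combination h3
    have h5 : (t : ℂ) = (k:ℂ) * 2^n := mul_left_cancel₀ h2I h4
    have h6 : (t : ℂ) = ((k * 2^n : ℤ) : ℂ) := by push_cast; exact h5
    have ht' : t = k * 2^n := by exact_mod_cast h6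
    have hN' : (0:ℤ) < 2^n := by positivity
    rcases lt_trichotomy k 0 with h | h | h
    · have : k * 2^n ≤ (-1) * 2^n := mul_le_mul_of_nonneg_right (by omega) hN'.le
      linarith
    · subst h; simp at ht'; exact ht ht'
    · have : (1:ℤ) * 2^n ≤ k * 2^n := mul_le_mul_of_nonneg_right (by omega) hN'.le
      linarith
  have hωN : ω ^ (2^n : ℕ) = 1 := by
    rw [hω, ← Complex.exp_nat_mul]
    have : (2^n : ℕ) * (2 * (Real.pi:ℂ) * Complex.I * t / (2^n : ℂ))
        = t * (2 * Real.pi * Complex.I) := by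
      push_cast
      field_simp
    rw [this, Complex.exp_int_mul_two_pi_mul_I]
  rw [geom_sum_eq hω1, hωN]
  simp

/-! ### The oscillating factors -/

def gterm (n k l : ℕ) (j : ℤ) : ℂ :=
  Complex.exp (2 * (Real.pi : ℂ) * Complex.I *
    ((((k : ℤ) - (l : ℤ)) * oIdx n j : ℤ) : ℂ) / (2 ^ n : ℂ))

def Eterm (n k : ℕ) (m : ℤ) : ℂ :=
  Complex.exp (2 * (Real.pi : ℂ) * Complex.I * (((k : ℤ) * m : ℤ) : ℂ) / (2 ^ n : ℂ))

lemma exp_split (n : ℕ) (m : ℤ) (k l : ℕ) (j : ℤ) :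
    Complex.exp (2 * (Real.pi : ℂ) * Complex.I *
        ((((k : ℤ) - (l : ℤ)) * oIdx n j + (k : ℤ) * m : ℤ) : ℂ) / (2 ^ n : ℂ))
      = gterm n k l j * Eterm n k m := by
  rw [gterm, Eterm, ← Complex.exp_add]
  congr 1
  push_cast
  ring

lemma gterm_abs (n k l : ℕ) (j : ℤ) : ‖gterm n k l j‖ = 1 := by
  rw [gterm, show 2 * (Real.pi : ℂ) * Complex.I *
        ((((k : ℤ) - (l : ℤ)) * oIdx n j : ℤ) : ℂ) / (2 ^ n : ℂ)
      = ((2 * Real.pi * ((((k : ℤ) - (l : ℤ)) * oIdx n j : ℤ) : ℝ) / 2 ^ n : ℝ) : ℂ) * Complex.I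
    from by push_cast; ring]
  exact Complex.norm_exp_ofReal_mul_I _

lemma Eterm_abs (n k : ℕ) (m : ℤ) : ‖Eterm n k m‖ = 1 := by
  rw [Eterm, show 2 * (Real.pi : ℂ) * Complex.I * (((k : ℤ) * m : ℤ) : ℂ) / (2 ^ n : ℂ)
      = ((2 * Real.pi * (((k : ℤ) * m : ℤ) : ℝ) / 2 ^ n : ℝ) : ℂ) * Complex.I
    from by push_cast; ring]
  exact Complex.norm_exp_ofReal_mul_I _

lemma sum_gterm (n : ℕ) (hn : 1 ≤ n) (k l : ℕ) (hk : k < 2^n) (hl : l < 2^n) :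
    ∑ j ∈ Jn n, gterm n k l j = if k = l then ((2^n : ℕ) : ℂ) else 0 := by
  have hc : ((2^n : ℕ) : ℤ) = 2^n := by norm_cast
  by_cases hkl : k = l
  · subst hkl
    rw [if_pos rfl]
    have h1 : ∀ j ∈ Jn n, gterm n k k j = 1 := by
      intro j hj
      rw [gterm]
      simp
    rw [Finset.sum_congr rfl h1, Finset.sum_const, card_Jn n hn, nsmul_eq_mul, mul_one]
  · rw [if_neg hkl]
    have ht : ((k : ℤ) - (l : ℤ)) ≠ 0 := sub_ne_zero.2 (by exact_mod_cast hkl)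
    have h2 : ∀ j ∈ Jn n, gterm n k l j
        = Complex.exp (2 * (Real.pi : ℂ) * Complex.I * (((k : ℤ) - (l : ℤ) : ℤ) : ℂ)
            * ((oIdx n j : ℤ) : ℂ) / (2 ^ n : ℂ)) := by
      intro j hj
      rw [gterm]
      congr 1
      push_cast
      ring
    rw [Finset.sum_congr rfl h2]
    exact sum_exp_oIdx n hn ((k : ℤ) - (l : ℤ)) ht (by omega) (by omega)

/-! ### The key pointwise estimate -/

set_option maxHeartbeats 1000000 in
lemma key_est (p τ : ℝ) (n : ℕ) (hn : 1 ≤ n) (m : ℤ) (k l : ℕ) (hk : k < 2^n) (hl : l < 2^n) :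
    ‖Atilde p τ n m k l
      - psi p τ m (2 * Real.pi * l / 2 ^ n) * (if k = l then 1 else 0)‖
    ≤ (1/(2^n : ℝ)) * ∑ j ∈ Jn n,
        |cstN p τ n m j - Real.exp (-(τ * |(m : ℝ)| ^ p) / 2)| := by
  have hNC : ((2 : ℂ)^n) ≠ 0 := pow_ne_zero _ two_ne_zero
  have stepA : Atilde p τ n m k l
      = (1/(2^n : ℂ)) * ∑ j ∈ Jn n, gterm n k l j * Eterm n k m * (cstN p τ n m j : ℂ) := by
    rw [Atilde]
    congr 1
    exact Finset.sum_congr rfl fun j hj => by rw [exp_split]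
  have stepsum : ∑ j ∈ Jn n, gterm n k l j * Eterm n k m * (cstN p τ n m j : ℂ)
      = Eterm n k m * (∑ j ∈ Jn n, gterm n k l j
            * (((cstN p τ n m j - Real.exp (-(τ * |(m : ℝ)| ^ p) / 2) : ℝ)) : ℂ))
        + (Real.exp (-(τ * |(m : ℝ)| ^ p) / 2) : ℂ) * Eterm n k m * ∑ j ∈ Jn n, gterm n k l j := by
    rw [Finset.mul_sum, Finset.mul_sum, ← Finset.sum_add_distrib]
    exact Finset.sum_congr rfl fun j hj => by push_cast; ring
  have stepD : (1/(2^n : ℂ)) * ((Real.exp (-(τ * |(m : ℝ)| ^ p) / 2) : ℂ) * Eterm n k m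
        * (if k = l then ((2^n : ℕ) : ℂ) else 0))
      = psi p τ m (2 * Real.pi * l / 2 ^ n) * (if k = l then 1 else 0) := by
    by_cases hkl : k = l
    · subst hkl
      rw [if_pos rfl, if_pos rfl, mul_one, psi, Eterm,
        show 2 * (Real.pi : ℂ) * Complex.I * (((k : ℤ) * m : ℤ) : ℂ) / (2 ^ n : ℂ)
          = Complex.I * (m : ℂ) * ((2 * Real.pi * (k : ℝ) / 2 ^ n : ℝ) : ℂ) from by
            push_cast; ring]
      push_cast
      field_simp
      try ring
    · rw [if_neg hkl, if_neg hkl]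
      simp
  have hsplit : Atilde p τ n m k l
      - psi p τ m (2 * Real.pi * l / 2 ^ n) * (if k = l then 1 else 0)
      = (1/(2^n : ℂ)) * (Eterm n k m * ∑ j ∈ Jn n, gterm n k l j
          * (((cstN p τ n m j - Real.exp (-(τ * |(m : ℝ)| ^ p) / 2) : ℝ)) : ℂ)) := by
    rw [stepA, stepsum, sum_gterm n hn k l hk hl, mul_add, stepD]
    ring
  rw [hsplit, norm_mul, norm_mul, Eterm_abs]
  have h1N : ‖(1/(2^n : ℂ))‖ = 1/(2^n : ℝ) := by
    rw [norm_div, norm_one, norm_pow, Complex.norm_two]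
  rw [h1N, one_mul]
  have hNpos : (0:ℝ) ≤ 1/(2^n : ℝ) := by positivity
  refine mul_le_mul_of_nonneg_left ?_ hNpos
  refine le_trans (norm_sum_le _ _) ?_
  refine Finset.sum_le_sum fun j hj => ?_
  rw [norm_mul, gterm_abs, one_mul, Complex.norm_real, Real.norm_eq_abs]

/-! ### Bounding the residual weights -/

lemma card_boundary (n : ℕ) (hn : 1 ≤ n) (m : ℤ) :
    ((Jn n).filter (fun j => ¬ (m + j ∈ Jn n))).card ≤ m.natAbs + 1 := by
  have hM : (1:ℤ) ≤ 2^(n-1) := by exact_mod_cast Nat.one_le_two_pow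
  have hsub : (Jn n).filter (fun j => ¬ (m + j ∈ Jn n))
      ⊆ insert (-m) ((Finset.Ioc ((2^(n-1):ℤ) - m) (2^(n-1):ℤ))
          ∪ (Finset.Ico (-(2^(n-1):ℤ)) (-(2^(n-1):ℤ) - m))) := by
    intro j hj
    rw [Finset.mem_filter, mem_Jn, mem_Jn] at hj
    simp only [Finset.mem_insert, Finset.mem_union, Finset.mem_Ioc, Finset.mem_Ico]
    omega
  refine le_trans (Finset.card_le_card hsub) ?_
  refine le_trans (Finset.card_insert_le _ _) ?_
  have h1 := Finset.card_union_le (Finset.Ioc ((2^(n-1):ℤ) - m) (2^(n-1):ℤ))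
    (Finset.Ico (-(2^(n-1):ℤ)) (-(2^(n-1):ℤ) - m))
  rw [Int.card_Ioc, Int.card_Ico] at h1
  omega

lemma interior_term (p τ : ℝ) (hp : 0 < p) (hp1 : p < 1) (hτ : 0 < τ) (m j : ℤ)
    (hj : j ≠ 0) (hmj : m + j ≠ 0) :
    |cst p τ m j - Real.exp (-(τ * |(m : ℝ)| ^ p) / 2)|
      ≤ (τ*p/2) * |(m:ℝ)| * (|(j:ℝ)|^(p-1) + |((m+j : ℤ):ℝ)|^(p-1)) := by
  have hx1 : (1:ℝ) ≤ |(j:ℝ)| := by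
    rw [← Int.cast_abs]; exact_mod_cast Int.one_le_abs hj
  have hy1 : (1:ℝ) ≤ |((m+j : ℤ):ℝ)| := by
    rw [← Int.cast_abs]; exact_mod_cast Int.one_le_abs hmj
  have hd1 : |((m+j : ℤ):ℝ)| - |(j:ℝ)| ≤ |(m:ℝ)| := by
    have h1 := abs_sub_abs_le_abs_sub ((m+j : ℤ):ℝ) ((j : ℤ):ℝ)
    have e1 : ((m+j : ℤ):ℝ) - ((j : ℤ):ℝ) = (m:ℝ) := by push_cast; ring
    rwa [e1] at h1
  have hd2 : |(j:ℝ)| - |((m+j : ℤ):ℝ)| ≤ |(m:ℝ)| := by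
    have h1 := abs_sub_abs_le_abs_sub ((j : ℤ):ℝ) ((m+j : ℤ):ℝ)
    have e1 : ((j : ℤ):ℝ) - ((m+j : ℤ):ℝ) = -(m:ℝ) := by push_cast; ring
    rwa [e1, abs_neg] at h1
  have hsub : |((m+j : ℤ):ℝ)|^p ≤ |(m:ℝ)|^p + |(j:ℝ)|^p := by
    have h1 : |((m+j : ℤ):ℝ)| ≤ |(m:ℝ)| + |(j:ℝ)| := by
      push_cast
      exact abs_add_le _ _
    calc |((m+j : ℤ):ℝ)|^p ≤ (|(m:ℝ)| + |(j:ℝ)|)^p :=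
          Real.rpow_le_rpow (abs_nonneg _) h1 hp.le
      _ ≤ |(m:ℝ)|^p + |(j:ℝ)|^p := rpow_subadd hp.le hp1.le (abs_nonneg _) (abs_nonneg _)
  have hcst : cst p τ m j
      = Real.exp (-(τ*(|(m:ℝ)|^p + |(j:ℝ)|^p - |((m+j : ℤ):ℝ)|^p)/2)) := by
    rw [cst]; congr 1; ring
  have hA : Real.exp (-(τ * |(m : ℝ)| ^ p) / 2) = Real.exp (-(τ*|(m:ℝ)|^p/2)) := by
    congr 1; ring
  rw [hcst, hA]
  have hα : 0 ≤ τ*(|(m:ℝ)|^p + |(j:ℝ)|^p - |((m+j : ℤ):ℝ)|^p)/2 := by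
    have h0 : 0 ≤ |(m:ℝ)|^p + |(j:ℝ)|^p - |((m+j : ℤ):ℝ)|^p := by linarith
    have := mul_nonneg hτ.le h0
    linarith
  have hβ : 0 ≤ τ*|(m:ℝ)|^p/2 := by positivity
  refine le_trans (exp_neg_lipschitz hα hβ) ?_
  have e3 : τ*(|(m:ℝ)|^p + |(j:ℝ)|^p - |((m+j : ℤ):ℝ)|^p)/2 - τ*|(m:ℝ)|^p/2
      = (τ/2)*(|(j:ℝ)|^p - |((m+j : ℤ):ℝ)|^p) := by ring
  rw [e3, abs_mul, abs_of_nonneg (by positivity : (0:ℝ) ≤ τ/2)]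
  have hx0 : (0:ℝ) ≤ |(j:ℝ)|^(p-1) := Real.rpow_nonneg (abs_nonneg _) _
  have hy0 : (0:ℝ) ≤ |((m+j : ℤ):ℝ)|^(p-1) := Real.rpow_nonneg (abs_nonneg _) _
  have hM0 : (0:ℝ) ≤ |(m:ℝ)| := abs_nonneg _
  have hmain : |(|(j:ℝ)|^p - |((m+j : ℤ):ℝ)|^p)|
      ≤ p * |(m:ℝ)| * (|(j:ℝ)|^(p-1) + |((m+j : ℤ):ℝ)|^(p-1)) := by
    rcases le_total (|(j:ℝ)|) (|((m+j : ℤ):ℝ)|) with hxy | hxy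
    · rw [abs_of_nonpos
        (sub_nonpos.2 (Real.rpow_le_rpow (abs_nonneg _) hxy hp.le))]
      have h5 := mvt_upper hp.le hp1.le (by linarith : (0:ℝ) < |(j:ℝ)|) hxy
      have h6 : p*|(j:ℝ)|^(p-1)*(|((m+j : ℤ):ℝ)| - |(j:ℝ)|) ≤ p*|(j:ℝ)|^(p-1)*|(m:ℝ)| :=
        mul_le_mul_of_nonneg_left hd1 (mul_nonneg hp.le hx0)
      nlinarith [mul_nonneg (mul_nonneg hp.le hM0) hy0]
    · rw [abs_of_nonneg
        (sub_nonneg.2 (Real.rpow_le_rpow (abs_nonneg _) hxy hp.le))]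
      have h5 := mvt_upper hp.le hp1.le (by linarith : (0:ℝ) < |((m+j : ℤ):ℝ)|) hxy
      have h6 : p*|((m+j : ℤ):ℝ)|^(p-1)*(|(j:ℝ)| - |((m+j : ℤ):ℝ)|)
          ≤ p*|((m+j : ℤ):ℝ)|^(p-1)*|(m:ℝ)| :=
        mul_le_mul_of_nonneg_left hd2 (mul_nonneg hp.le hy0)
      nlinarith [mul_nonneg (mul_nonneg hp.le hM0) hx0]
  calc (τ/2) * |(|(j:ℝ)|^p - |((m+j : ℤ):ℝ)|^p)|
      ≤ (τ/2) * (p * |(m:ℝ)| * (|(j:ℝ)|^(p-1) + |((m+j : ℤ):ℝ)|^(p-1))) :=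
        mul_le_mul_of_nonneg_left hmain (by positivity)
    _ = (τ*p/2) * |(m:ℝ)| * (|(j:ℝ)|^(p-1) + |((m+j : ℤ):ℝ)|^(p-1)) := by ring

lemma sum_range_rpow (p : ℝ) (hp : 0 < p) (hp1 : p < 1) (M : ℕ) :
    ∑ i ∈ Finset.range M, ((i:ℝ)+1)^(p-1) ≤ (M:ℝ)^p / p := by
  have key : ∀ i : ℕ, ((i:ℝ)+1)^(p-1) ≤ (((i:ℝ)+1)^p - ((i:ℝ))^p)/p := by
    intro i
    have h := mvt_lower hp.le hp1.le (by positivity : (0:ℝ) ≤ (i:ℝ))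
      (by linarith : (i:ℝ) ≤ (i:ℝ)+1) (by positivity : (0:ℝ) < (i:ℝ)+1)
    rw [le_div_iff₀ hp]
    nlinarith [h]
  calc ∑ i ∈ Finset.range M, ((i:ℝ)+1)^(p-1)
      ≤ ∑ i ∈ Finset.range M, ((((i:ℝ)+1)^p - ((i:ℝ))^p)/p) :=
        Finset.sum_le_sum fun i _ => key i
    _ = (∑ i ∈ Finset.range M, ((((i+1:ℕ)):ℝ)^p - (((i:ℕ)):ℝ)^p))/p := by
        rw [← Finset.sum_div]
        congr 1
        refine Finset.sum_congr rfl fun i _ => ?_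
        push_cast
        ring
    _ = (((M:ℕ):ℝ)^p - (((0:ℕ)):ℝ)^p)/p := by
        rw [Finset.sum_range_sub (fun i => (((i:ℕ)):ℝ)^p)]
    _ = (M:ℝ)^p/p := by
        norm_num [Real.zero_rpow hp.ne']

lemma sum_Jn_rpow (p : ℝ) (hp : 0 < p) (hp1 : p < 1) (n : ℕ) (hn : 1 ≤ n) :
    ∑ j ∈ Jn n, |(j:ℝ)|^(p-1) ≤ 2*((2^n : ℝ))^p/p := by
  have hM : (1:ℤ) ≤ 2^(n-1) := by exact_mod_cast Nat.one_le_two_pow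
  have hcM : (((2^(n-1) : ℕ)) : ℤ) = 2^(n-1) := by norm_cast
  have hJn : Jn n = Finset.Icc (-(2^(n-1):ℤ)) (-1) ∪ Finset.Icc 1 (2^(n-1):ℤ) := by
    ext j
    simp only [mem_Jn, Finset.mem_union, Finset.mem_Icc]
    omega
  have hdisj : Disjoint (Finset.Icc (-(2^(n-1):ℤ)) (-1)) (Finset.Icc 1 (2^(n-1):ℤ)) := by
    rw [Finset.disjoint_left]
    intro x hx hx'
    rw [Finset.mem_Icc] at hx hx'
    omega
  rw [hJn, Finset.sum_union hdisj]
  have hpos : ∑ j ∈ Finset.Icc (1:ℤ) (2^(n-1)), |(j:ℝ)|^(p-1) ≤ ((2^n : ℝ))^p/p := by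
    have hre : ∑ j ∈ Finset.Icc (1:ℤ) (2^(n-1)), |(j:ℝ)|^(p-1)
        = ∑ i ∈ Finset.range (2^(n-1) : ℕ), ((i:ℝ)+1)^(p-1) := by
      refine Finset.sum_nbij' (fun j => (j - 1).toNat) (fun i => (i:ℤ) + 1)
        ?_ ?_ ?_ ?_ ?_
      · intro j hj
        rw [Finset.mem_Icc] at hj
        rw [Finset.mem_range]
        omega
      · intro i hi
        rw [Finset.mem_range] at hi
        rw [Finset.mem_Icc]
        omega
      · intro j hj
        rw [Finset.mem_Icc] at hj
        omega
      · intro i hi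
        rw [Finset.mem_range] at hi
        omega
      · intro j hj
        rw [Finset.mem_Icc] at hj
        have h1 : ((((j-1).toNat : ℕ)) : ℝ) = (j:ℝ) - 1 := by
          exact_mod_cast congrArg (Int.cast : ℤ → ℝ) (Int.toNat_of_nonneg (by omega))
        have h2 : (0:ℝ) < (j:ℝ) := by exact_mod_cast (by omega : (0:ℤ) < j)
        rw [abs_of_pos h2, h1]
        norm_num
    rw [hre]
    refine le_trans (sum_range_rpow p hp hp1 (2^(n-1))) ?_
    have hle : (((2^(n-1) : ℕ)) : ℝ) ≤ ((2^n : ℝ)) := by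
      push_cast
      exact pow_le_pow_right₀ (by norm_num) (by omega)
    exact (div_le_div_iff_of_pos_right hp).2 (Real.rpow_le_rpow (by positivity) hle hp.le)
  have hneg : ∑ j ∈ Finset.Icc (-(2^(n-1):ℤ)) (-1), |(j:ℝ)|^(p-1)
      = ∑ j ∈ Finset.Icc (1:ℤ) (2^(n-1)), |(j:ℝ)|^(p-1) := by
    refine Finset.sum_nbij' (fun j => -j) (fun j => -j) ?_ ?_ ?_ ?_ ?_
    · intro j hj
      rw [Finset.mem_Icc] at hj
      rw [Finset.mem_Icc]
      omega
    · intro j hj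
      rw [Finset.mem_Icc] at hj
      rw [Finset.mem_Icc]
      omega
    · intro j _
      ring
    · intro j _
      ring
    · intro j _
      have h1 : ((-j : ℤ) : ℝ) = -(j:ℝ) := by push_cast; ring
      rw [h1, abs_neg]
  rw [hneg, ← two_mul]
  calc 2 * ∑ j ∈ Finset.Icc (1:ℤ) (2^(n-1)), |(j:ℝ)|^(p-1)
      ≤ 2 * (((2^n : ℝ))^p/p) := by linarith
    _ = 2*((2^n : ℝ))^p/p := by ring

lemma boundary_bound (p τ : ℝ) (hp : 0 < p) (hp1 : p < 1) (hτ : 0 < τ) (s : ℕ) (hs1 : 1 ≤ s)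
    (hps : 1 ≤ p * s) (n : ℕ) (hn : 1 ≤ n) (m : ℤ) :
    ∑ j ∈ (Jn n).filter (fun j => ¬ (m + j ∈ Jn n)),
        |cstN p τ n m j - Real.exp (-(τ * |(m : ℝ)| ^ p) / 2)|
      ≤ 1 + 2*(2*(s:ℝ)/τ)^s := by
  have hterm : ∀ j ∈ (Jn n).filter (fun j => ¬ (m + j ∈ Jn n)),
      |cstN p τ n m j - Real.exp (-(τ * |(m : ℝ)| ^ p) / 2)|
        = Real.exp (-(τ * |(m : ℝ)| ^ p) / 2) := by
    intro j hj
    rw [Finset.mem_filter] at hj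
    rw [cstN, if_neg hj.2, zero_sub, abs_neg, abs_of_nonneg (Real.exp_pos _).le]
  rw [Finset.sum_congr rfl hterm, Finset.sum_const, nsmul_eq_mul]
  have hcard : ((((Jn n).filter (fun j => ¬ (m + j ∈ Jn n))).card : ℕ) : ℝ)
      ≤ (m.natAbs : ℝ) + 1 := by
    exact_mod_cast card_boundary n hn m
  have ha1 : Real.exp (-(τ * |(m : ℝ)| ^ p) / 2) ≤ 1 := by
    rw [Real.exp_le_one_iff]
    have h0 : 0 ≤ τ * |(m:ℝ)|^p := mul_nonneg hτ.le (Real.rpow_nonneg (abs_nonneg _) _)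
    linarith
  have ha0 : (0:ℝ) ≤ Real.exp (-(τ * |(m : ℝ)| ^ p) / 2) := (Real.exp_pos _).le
  have hC0 : (0:ℝ) ≤ 2*(2*(s:ℝ)/τ)^s := by positivity
  by_cases hm : m = 0
  · subst hm
    have hcard1 : ((((Jn n).filter (fun j => ¬ ((0:ℤ) + j ∈ Jn n))).card : ℕ) : ℝ) ≤ 1 := by
      refine le_trans hcard ?_
      norm_num
    have := mul_le_mul hcard1 ha1 ha0 (by norm_num : (0:ℝ) ≤ 1)
    rw [one_mul] at this
    linarith
  · have hm1 : (1:ℝ) ≤ |(m:ℝ)| := by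
      rw [← Int.cast_abs]; exact_mod_cast Int.one_le_abs hm
    have hmabs : ((m.natAbs : ℕ) : ℝ) = |(m:ℝ)| := by
      rw [Nat.cast_natAbs, Int.cast_abs]
    have hcard2 : ((((Jn n).filter (fun j => ¬ (m + j ∈ Jn n))).card : ℕ) : ℝ)
        ≤ 2*|(m:ℝ)| := by
      rw [hmabs] at hcard
      linarith
    have hmp : (0:ℝ) < |(m:ℝ)|^p := Real.rpow_pos_of_pos (by linarith) _
    have hu : (0:ℝ) < τ * |(m:ℝ)|^p / 2 := by positivity
    have haa : Real.exp (-(τ * |(m : ℝ)| ^ p) / 2) ≤ ((s:ℝ)/(τ*|(m:ℝ)|^p/2))^s := by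
      rw [show -(τ * |(m:ℝ)|^p) / 2 = -(τ*|(m:ℝ)|^p/2) by ring]
      exact exp_bound s hs1 hu
    have heq : ((s:ℝ)/(τ*|(m:ℝ)|^p/2))^s = (2*(s:ℝ)/τ)^s / (|(m:ℝ)|^p)^s := by
      rw [show (s:ℝ)/(τ*|(m:ℝ)|^p/2) = (2*(s:ℝ)/τ) / (|(m:ℝ)|^p) by
        field_simp]
      rw [div_pow]
    have hkey : |(m:ℝ)| ≤ (|(m:ℝ)|^p)^s := by
      rw [← Real.rpow_natCast (|(m:ℝ)|^p) s, ← Real.rpow_mul (abs_nonneg _)]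
      calc |(m:ℝ)| = |(m:ℝ)|^(1:ℝ) := (Real.rpow_one _).symm
        _ ≤ |(m:ℝ)|^(p*(s:ℝ)) := Real.rpow_le_rpow_of_exponent_le hm1 (by exact_mod_cast hps)
    have hfin : ((((Jn n).filter (fun j => ¬ (m + j ∈ Jn n))).card : ℕ) : ℝ)
        * Real.exp (-(τ * |(m : ℝ)| ^ p) / 2) ≤ 2*(2*(s:ℝ)/τ)^s := by
      calc ((((Jn n).filter (fun j => ¬ (m + j ∈ Jn n))).card : ℕ) : ℝ)
          * Real.exp (-(τ * |(m : ℝ)| ^ p) / 2)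
          ≤ (2*|(m:ℝ)|) * ((2*(s:ℝ)/τ)^s / (|(m:ℝ)|^p)^s) := by
            refine mul_le_mul hcard2 (haa.trans heq.le) ha0 (by positivity)
        _ = 2*(2*(s:ℝ)/τ)^s * (|(m:ℝ)| / (|(m:ℝ)|^p)^s) := by ring
        _ ≤ 2*(2*(s:ℝ)/τ)^s * 1 := by
            refine mul_le_mul_of_nonneg_left ?_ hC0
            rw [div_le_one (by positivity)]
            exact hkey
        _ = 2*(2*(s:ℝ)/τ)^s := mul_one _
    linarith

set_option maxHeartbeats 1000000 in
lemma interior_bound (p τ : ℝ) (hp : 0 < p) (hp1 : p < 1) (hτ : 0 < τ)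
    (n : ℕ) (hn : 1 ≤ n) (m : ℤ) :
    ∑ j ∈ (Jn n).filter (fun j => m + j ∈ Jn n),
        |cstN p τ n m j - Real.exp (-(τ * |(m : ℝ)| ^ p) / 2)|
      ≤ 2*τ*|(m:ℝ)| * ((2^n : ℝ))^p := by
  have hstep : ∀ j ∈ (Jn n).filter (fun j => m + j ∈ Jn n),
      |cstN p τ n m j - Real.exp (-(τ * |(m : ℝ)| ^ p) / 2)|
        ≤ (τ*p/2) * |(m:ℝ)| * (|(j:ℝ)|^(p-1) + |((m+j : ℤ):ℝ)|^(p-1)) := by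
    intro j hj
    rw [Finset.mem_filter] at hj
    have hj0 : j ≠ 0 := (mem_Jn.1 hj.1).1
    have hmj0 : m + j ≠ 0 := (mem_Jn.1 hj.2).1
    rw [cstN, if_pos hj.2]
    exact interior_term p τ hp hp1 hτ m j hj0 hmj0
  have hF0 : ∀ i : ℤ, (0:ℝ) ≤ |(i:ℝ)|^(p-1) := fun i => Real.rpow_nonneg (abs_nonneg _) _
  have hS1 : ∑ j ∈ (Jn n).filter (fun j => m + j ∈ Jn n), |(j:ℝ)|^(p-1)
      ≤ ∑ j ∈ Jn n, |(j:ℝ)|^(p-1) :=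
    Finset.sum_le_sum_of_subset_of_nonneg (Finset.filter_subset _ _) (fun i _ _ => hF0 i)
  have hS2 : ∑ j ∈ (Jn n).filter (fun j => m + j ∈ Jn n), |((m+j : ℤ):ℝ)|^(p-1)
      ≤ ∑ j ∈ Jn n, |(j:ℝ)|^(p-1) := by
    have hinj : ∀ x ∈ (Jn n).filter (fun j => m + j ∈ Jn n),
        ∀ y ∈ (Jn n).filter (fun j => m + j ∈ Jn n), m + x = m + y → x = y := by
      intro x _ y _ h
      omega
    have himg := Finset.sum_image (f := fun i : ℤ => |(i:ℝ)|^(p-1))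
      (g := fun j : ℤ => m + j) (s := (Jn n).filter (fun j => m + j ∈ Jn n)) hinj
    rw [← himg]
    refine Finset.sum_le_sum_of_subset_of_nonneg ?_ (fun i _ _ => hF0 i)
    intro i hi
    rw [Finset.mem_image] at hi
    obtain ⟨j, hj, rfl⟩ := hi
    exact (Finset.mem_filter.1 hj).2
  have hSJ := sum_Jn_rpow p hp hp1 n hn
  calc ∑ j ∈ (Jn n).filter (fun j => m + j ∈ Jn n),
        |cstN p τ n m j - Real.exp (-(τ * |(m : ℝ)| ^ p) / 2)|
      ≤ ∑ j ∈ (Jn n).filter (fun j => m + j ∈ Jn n),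
          (τ*p/2) * |(m:ℝ)| * (|(j:ℝ)|^(p-1) + |((m+j : ℤ):ℝ)|^(p-1)) :=
        Finset.sum_le_sum hstep
    _ = (τ*p/2) * |(m:ℝ)| * (∑ j ∈ (Jn n).filter (fun j => m + j ∈ Jn n), |(j:ℝ)|^(p-1)
          + ∑ j ∈ (Jn n).filter (fun j => m + j ∈ Jn n), |((m+j : ℤ):ℝ)|^(p-1)) := by
        rw [← Finset.sum_add_distrib, Finset.mul_sum]
    _ ≤ (τ*p/2) * |(m:ℝ)| * (2*((2^n : ℝ))^p/p + 2*((2^n : ℝ))^p/p) := by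
        refine mul_le_mul_of_nonneg_left ?_ (by positivity)
        have := hS1.trans hSJ
        have := hS2.trans hSJ
        linarith
    _ = 2*τ*|(m:ℝ)| * ((2^n : ℝ))^p := by
        field_simp
        ring

lemma sum_d_bound (p τ : ℝ) (hp : 0 < p) (hp1 : p < 1) (hτ : 0 < τ) (s : ℕ) (hs1 : 1 ≤ s)
    (hps : 1 ≤ p * s) (n : ℕ) (hn : 1 ≤ n) (m : ℤ) :
    ∑ j ∈ Jn n, |cstN p τ n m j - Real.exp (-(τ * |(m : ℝ)| ^ p) / 2)|
      ≤ (1 + 2*(2*(s:ℝ)/τ)^s) + 2*τ*|(m:ℝ)| * ((2^n : ℝ))^p := by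
  rw [← Finset.sum_filter_add_sum_filter_not (Jn n) (fun j => m + j ∈ Jn n)]
  have h1 := interior_bound p τ hp hp1 hτ n hn m
  have h2 := boundary_bound p τ hp hp1 hτ s hs1 hps n hn m
  linarith

/-! ### Main theorem -/

set_option maxHeartbeats 1000000 in
/-- For every `p ∈ (0,1)` and `τ > 0` there are a constant `C_{p,τ} > 0`
and an absolute constant `C > 0` such that the column residual satisfies
`(Σ_k |ε_{mnkl}|²)^{1/2} ≤ (C_{p,τ} + C τ |m|) / N^{1/2−p}`. -/
theorem column_residual_bound :
    ∃ C : ℝ, 0 < C ∧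
      ∀ (p τ : ℝ), p ∈ Set.Ioo (0 : ℝ) 1 → 0 < τ →
        ∃ Cpt : ℝ, 0 < Cpt ∧
          ∀ (n : ℕ), 1 ≤ n → ∀ (m : ℤ) (l : ℕ), l < 2 ^ n →
            Real.sqrt (∑ k ∈ Finset.range (2 ^ n),
                (‖Atilde p τ n m k l
                  - psi p τ m (2 * Real.pi * l / 2 ^ n) * (if k = l then 1 else 0)‖) ^ 2)
              ≤ (Cpt + C * τ * |(m : ℝ)|) / ((2 ^ n : ℝ)) ^ ((1 : ℝ) / 2 - p) := by
  refine ⟨2, by norm_num, ?_⟩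
  rintro p τ ⟨hp, hp1⟩ hτ
  have hs1 : 1 ≤ ⌈1/p⌉₊ := Nat.one_le_iff_ne_zero.2 (by
    have : 0 < ⌈1/p⌉₊ := Nat.ceil_pos.2 (by positivity)
    omega)
  have hps : 1 ≤ p * (⌈1/p⌉₊ : ℝ) := by
    have h1 : 1/p ≤ (⌈1/p⌉₊ : ℝ) := Nat.le_ceil _
    have h2 : p * (1/p) ≤ p * (⌈1/p⌉₊ : ℝ) := by nlinarith
    have h3 : p * (1/p) = 1 := by field_simp
    linarith
  refine ⟨1 + 2*(2*((⌈1/p⌉₊ : ℕ):ℝ)/τ)^(⌈1/p⌉₊ : ℕ), by positivity, ?_⟩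
  intro n hn m l hl
  have hNpos : (0:ℝ) < (2^n : ℝ) := by positivity
  have hN1 : (1:ℝ) ≤ (2^n : ℝ) := by
    have h : ((1:ℕ):ℝ) ≤ ((2^n : ℕ):ℝ) := by exact_mod_cast Nat.one_le_two_pow
    push_cast at h
    linarith
  have hNp1 : (1:ℝ) ≤ ((2^n : ℝ))^p := by
    calc (1:ℝ) = ((2^n : ℝ))^(0:ℝ) := (Real.rpow_zero _).symm
      _ ≤ ((2^n : ℝ))^p := Real.rpow_le_rpow_of_exponent_le hN1 hp.le
  set X : ℝ := (1 + 2*(2*((⌈1/p⌉₊ : ℕ):ℝ)/τ)^(⌈1/p⌉₊ : ℕ)) + 2 * τ * |(m : ℝ)| with hX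
  have hX0 : (0:ℝ) ≤ X := by positivity
  set D : ℝ := ∑ j ∈ Jn n, |cstN p τ n m j - Real.exp (-(τ * |(m : ℝ)| ^ p) / 2)| with hD
  have hD0 : 0 ≤ D := Finset.sum_nonneg fun j _ => abs_nonneg _
  have hDle : D ≤ X * ((2^n : ℝ))^p := by
    have h1 := sum_d_bound p τ hp hp1 hτ (⌈1/p⌉₊) hs1 hps n hn m
    rw [← hD] at h1
    have hK : (0:ℝ) ≤ 1 + 2*(2*((⌈1/p⌉₊ : ℕ):ℝ)/τ)^(⌈1/p⌉₊ : ℕ) := by positivity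
    have h2 : (1 + 2*(2*((⌈1/p⌉₊ : ℕ):ℝ)/τ)^(⌈1/p⌉₊ : ℕ))
        ≤ (1 + 2*(2*((⌈1/p⌉₊ : ℕ):ℝ)/τ)^(⌈1/p⌉₊ : ℕ)) * ((2^n : ℝ))^p := by
      nlinarith [mul_nonneg hK (sub_nonneg.2 hNp1)]
    calc D ≤ (1 + 2*(2*((⌈1/p⌉₊ : ℕ):ℝ)/τ)^(⌈1/p⌉₊ : ℕ)) + 2*τ*|(m:ℝ)| * ((2^n : ℝ))^p := h1
      _ ≤ (1 + 2*(2*((⌈1/p⌉₊ : ℕ):ℝ)/τ)^(⌈1/p⌉₊ : ℕ)) * ((2^n : ℝ))^p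
            + 2*τ*|(m:ℝ)| * ((2^n : ℝ))^p := by linarith
      _ = X * ((2^n : ℝ))^p := by rw [hX]; ring
  have hQpos : (0:ℝ) < ((2^n : ℝ))^((1:ℝ)/2 - p) := Real.rpow_pos_of_pos hNpos _
  have hRHS0 : (0:ℝ) ≤ X / ((2^n : ℝ))^((1:ℝ)/2 - p) := div_nonneg hX0 hQpos.le
  suffices hfin : (∑ k ∈ Finset.range (2 ^ n),
      (‖Atilde p τ n m k l
        - psi p τ m (2 * Real.pi * l / 2 ^ n) * (if k = l then 1 else 0)‖) ^ 2)
      ≤ (X / ((2^n : ℝ))^((1:ℝ)/2 - p))^2 by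
    have h := Real.sqrt_le_sqrt hfin
    rwa [Real.sqrt_sq hRHS0] at h
  have hpt : ∀ k ∈ Finset.range (2^n),
      (‖Atilde p τ n m k l
        - psi p τ m (2 * Real.pi * l / 2 ^ n) * (if k = l then 1 else 0)‖) ^ 2
      ≤ ((1/(2^n : ℝ)) * D)^2 := by
    intro k hk
    rw [Finset.mem_range] at hk
    exact pow_le_pow_left₀ (norm_nonneg _)
      (key_est p τ n hn m k l hk hl) 2
  have hsum := Finset.sum_le_card_nsmul (Finset.range (2^n)) _ (((1/(2^n : ℝ)) * D)^2) hpt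
  rw [Finset.card_range, nsmul_eq_mul] at hsum
  have hcast : (((2^n : ℕ)) : ℝ) = (2^n : ℝ) := by push_cast; ring
  rw [hcast] at hsum
  refine le_trans hsum ?_
  have hxx : (((2^n : ℝ))^((1:ℝ)/2 - p) * ((2^n : ℝ))^p)^2 = (2^n : ℝ) := by
    rw [← Real.rpow_add hNpos, show (1:ℝ)/2 - p + p = 1/2 by ring,
      ← Real.rpow_natCast (((2^n : ℝ))^((1:ℝ)/2)) 2, ← Real.rpow_mul hNpos.le,
      show (1:ℝ)/2 * ((2:ℕ):ℝ) = 1 by norm_num, Real.rpow_one]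
  have hstep1 : (2^n : ℝ) * ((1/(2^n : ℝ)) * D)^2 = D^2 / (2^n : ℝ) := by
    field_simp
  rw [hstep1]
  have hstep2 : D^2 ≤ (X * ((2^n : ℝ))^p)^2 := by
    exact pow_le_pow_left₀ hD0 hDle 2
  have hstep3 : D^2 / (2^n : ℝ) ≤ (X * ((2^n : ℝ))^p)^2 / (2^n : ℝ) :=
    (div_le_div_iff_of_pos_right hNpos).2 hstep2
  refine le_trans hstep3 (le_of_eq ?_)
  rw [div_pow, div_eq_div_iff hNpos.ne' (by positivity : ((((2^n : ℝ))^((1:ℝ)/2 - p))^2) ≠ 0)]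
  calc (X * ((2^n : ℝ))^p)^2 * (((2^n : ℝ))^((1:ℝ)/2 - p))^2
      = X^2 * ((((2^n : ℝ))^((1:ℝ)/2 - p)) * (((2^n : ℝ))^p))^2 := by ring
    _ = X^2 * (2^n : ℝ) := by rw [hxx]

end QECD
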